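/- Let F be the star forest F = K_{1,p_1} ∪ K_{1,p_2} ∪ … ∪ K_{1,p_t} with p_1 ≥ p_2 ≥ … ≥ p_t ≥ 1, and let s = max{i : 1 ≤ i ≤ t, p_i ≥ 2} (assume p_1 ≥ 2 so that s exists). Then for every i with 1 ≤ i ≤ s and every n ≥ i − 1 + Σ_{j=1}^{t}(p_j+1), one has ar(K_n, F) ≥ (i−1)n − C(i,2) + ⌊((p_i−2)/2)(n−i+1)⌋ + 1, where C(m,2) denotes the binomial coefficient m choose 2. -/

import Mathlib

open SimpleGraph Finset

/-- Number of colors used by an edge-coloring of the complete graph on `Fin n`. -/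
noncomputable def colorCount {n : ℕ} (c : Sym2 (Fin n) → ℕ) : ℕ :=
  (c '' (⊤ : SimpleGraph (Fin n)).edgeSet).ncard

/-- The coloring `c` of `K_n` admits a rainbow copy of the graph `G`. -/
def HasRainbowCopy {α : Type*} {n : ℕ} (c : Sym2 (Fin n) → ℕ) (G : SimpleGraph α) : Prop :=
  ∃ f : α → Fin n, Function.Injective f ∧
    ∀ e₁ ∈ G.edgeSet, ∀ e₂ ∈ G.edgeSet, e₁ ≠ e₂ → c (Sym2.map f e₁) ≠ c (Sym2.map f e₂)

/-- The anti-Ramsey number `ar(K_n, G)`: the maximum number of colors in an edge-coloring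
of `K_n` with no rainbow copy of `G`. -/
noncomputable def antiRamsey (n : ℕ) {α : Type*} (G : SimpleGraph α) : ℕ :=
  sSup {m | ∃ c : Sym2 (Fin n) → ℕ, ¬ HasRainbowCopy c G ∧ colorCount c = m}

/-- The star forest `K_{1,p 0} ∪ ⋯ ∪ K_{1,p (t-1)}`; in component `i`, the vertex with
value `0` is the center of a star with `p i` leaves. -/
def starForest (t : ℕ) (p : Fin t → ℕ) : SimpleGraph (Σ i : Fin t, Fin (p i + 1)) where
  Adj u v := u.1 = v.1 ∧ ((u.2.val = 0 ∧ v.2.val ≠ 0) ∨ (v.2.val = 0 ∧ u.2.val ≠ 0))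
  symm := by
    constructor
    rintro u v ⟨h1, h2⟩
    exact ⟨h1.symm, h2.symm⟩
  loopless := by
    constructor
    rintro u ⟨-, h⟩
    rcases h with ⟨h1, h2⟩ | ⟨h1, h2⟩ <;> exact h2 h1



open SimpleGraph Finset

namespace ARSF

/-- embed a natural number into `Fin n`. -/
def embed {n : ℕ} (hn : 0 < n) (x : ℕ) : Fin n := ⟨x % n, Nat.mod_lt _ hn⟩

lemma embed_val {n : ℕ} (hn : 0 < n) {x : ℕ} (hx : x < n) : (embed hn x).val = x :=
  Nat.mod_eq_of_lt hx

lemma embed_eq_iff {n : ℕ} (hn : 0 < n) {x y : ℕ} (hx : x < n) (hy : y < n) :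
    embed hn x = embed hn y ↔ x = y := by
  constructor
  · intro hh
    have := congrArg Fin.val hh
    rwa [embed_val hn hx, embed_val hn hy] at this
  · rintro rfl; rfl

/-- unordered pair of embedded naturals -/
def pr {n : ℕ} (hn : 0 < n) (x y : ℕ) : Sym2 (Fin n) := s(embed hn x, embed hn y)

lemma pr_eq_iff {n : ℕ} (hn : 0 < n) {x y x' y' : ℕ} (hx : x < n) (hy : y < n)
    (hx' : x' < n) (hy' : y' < n) :
    pr hn x y = pr hn x' y' ↔ (x = x' ∧ y = y') ∨ (x = y' ∧ y = x') := by
  rw [pr, pr, Sym2.eq_iff, embed_eq_iff hn hx hx', embed_eq_iff hn hy hy',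
    embed_eq_iff hn hx hy', embed_eq_iff hn hy hx']

lemma mem_pr_iff {n : ℕ} (hn : 0 < n) {x y : ℕ} (hx : x < n) (hy : y < n) (z : Fin n) :
    z ∈ pr hn x y ↔ z.val = x ∨ z.val = y := by
  rw [pr, Sym2.mem_iff]
  constructor
  · rintro (rfl | rfl)
    · exact Or.inl (embed_val hn hx)
    · exact Or.inr (embed_val hn hy)
  · rintro (hz | hz)
    · exact Or.inl (Fin.ext (by rw [hz, embed_val hn hx]))
    · exact Or.inr (Fin.ext (by rw [hz, embed_val hn hy]))

lemma two_mod {m x : ℕ} (h : x < 2 * m) :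
    (x < m ∧ x % m = x) ∨ (m ≤ x ∧ x % m = x - m) := by
  rcases Nat.lt_or_ge x m with h1 | h1
  · exact Or.inl ⟨h1, Nat.mod_eq_of_lt h1⟩
  · exact Or.inr ⟨h1, by rw [Nat.mod_eq_sub_mod h1, Nat.mod_eq_of_lt (by omega)]⟩

lemma mod_inj {m x y : ℕ} (hx : x % m = y % m) (hxy : x ≤ y) (hlt : y - x < m) : x = y := by
  have hd := (Nat.modEq_iff_dvd' hxy).mp hx
  rcases Nat.eq_zero_or_pos (y - x) with h | h
  · omega
  · have := Nat.le_of_dvd h hd; omega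



noncomputable def TA {n : ℕ} (hn : 0 < n) (a : ℕ) : Finset (Sym2 (Fin n)) :=
  ((range a).sigma (fun x => Ico (x + 1) n)).image (fun q => pr hn q.1 q.2)

noncomputable def Tcirc {n : ℕ} (hn : 0 < n) (a m k : ℕ) : Finset (Sym2 (Fin n)) :=
  ((range m) ×ˢ (Icc 1 k)).image (fun q => pr hn (a + q.1) (a + (q.1 + q.2) % m))

noncomputable def Tmatch {n : ℕ} (hn : 0 < n) (a m M : ℕ) : Finset (Sym2 (Fin n)) :=
  (range M).image (fun j => pr hn (a + j) (a + j + (m - m / 2)))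

lemma exists_of_mem_TA {n : ℕ} {hn : 0 < n} {a : ℕ} {e : Sym2 (Fin n)} (he : e ∈ TA hn a) :
    ∃ x y, x < a ∧ x < y ∧ y < n ∧ e = pr hn x y := by
  obtain ⟨q, hq, rfl⟩ := mem_image.mp he
  obtain ⟨h1, h2⟩ := mem_sigma.mp hq
  rw [mem_range] at h1
  rw [mem_Ico] at h2
  exact ⟨q.1, q.2, h1, by omega, by omega, rfl⟩

lemma exists_of_mem_Tcirc {n : ℕ} {hn : 0 < n} {a m k : ℕ} {e : Sym2 (Fin n)}
    (he : e ∈ Tcirc hn a m k) :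
    ∃ u δ, u < m ∧ 1 ≤ δ ∧ δ ≤ k ∧ e = pr hn (a + u) (a + (u + δ) % m) := by
  obtain ⟨q, hq, rfl⟩ := mem_image.mp he
  obtain ⟨h1, h2⟩ := mem_product.mp hq
  rw [mem_range] at h1
  rw [mem_Icc] at h2
  exact ⟨q.1, q.2, h1, h2.1, h2.2, rfl⟩

lemma exists_of_mem_Tmatch {n : ℕ} {hn : 0 < n} {a m M : ℕ} {e : Sym2 (Fin n)}
    (he : e ∈ Tmatch hn a m M) :
    ∃ j, j < M ∧ e = pr hn (a + j) (a + j + (m - m / 2)) := by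
  obtain ⟨j, hj, rfl⟩ := mem_image.mp he
  exact ⟨j, mem_range.mp hj, rfl⟩

section Main

variable {n a m k M : ℕ} (hn : 0 < n) (hnm : n = a + m) (hkm : 2 * k + 3 ≤ m)
  (hM : M = 0 ∨ (M = m / 2 ∧ 2 * k + 4 ≤ m))

set_option linter.unusedSectionVars false
include hnm hkm hM

lemma card_TA : (TA (n := n) hn a).card = ∑ x ∈ range a, (n - (x + 1)) := by
  rw [TA, card_image_of_injOn, card_sigma]
  · apply sum_congr rfl
    intro x _
    rw [Nat.card_Ico]
  · intro q hq q' hq' hpq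
    simp only [coe_sigma, Set.mem_sigma_iff, mem_coe, mem_range, mem_Ico] at hq hq'
    have h1 : q.1 < n := by omega
    have h2 : q.2 < n := by omega
    have h1' : q'.1 < n := by omega
    have h2' : q'.2 < n := by omega
    rw [pr_eq_iff hn h1 h2 h1' h2'] at hpq
    have : q.1 = q'.1 ∧ q.2 = q'.2 := by omega
    exact Sigma.ext this.1 (heq_of_eq this.2)

lemma card_Tcirc : (Tcirc (n := n) hn a m k).card = m * k := by
  rw [Tcirc, card_image_of_injOn, card_product, card_range, Nat.card_Icc, Nat.add_sub_cancel]

  rintro ⟨u, δ⟩ hq ⟨u', δ'⟩ hq' hpq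
  · dsimp only at hpq
    simp only [coe_product, Set.mem_prod, mem_coe, mem_range, mem_Icc] at hq hq'
    have hu : u < m := hq.1
    have hδ1 : 1 ≤ δ := hq.2.1
    have hδ2 : δ ≤ k := hq.2.2
    have hu' : u' < m := hq'.1
    have hδ1' : 1 ≤ δ' := hq'.2.1
    have hδ2' : δ' ≤ k := hq'.2.2
    have hm1 : (u + δ) % m < m := Nat.mod_lt _ (by omega)
    have hm2 : (u' + δ') % m < m := Nat.mod_lt _ (by omega)
    rw [pr_eq_iff hn (by omega) (by omega) (by omega) (by omega)] at hpq
    simp only [Prod.mk.injEq]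
    rcases hpq with ⟨h1, h2⟩ | ⟨h1, h2⟩
    · have hu'' : u = u' := by omega
      subst hu''
      have h2' : (u + δ) % m = (u + δ') % m := by omega
      rcases Nat.le_total δ δ' with hle | hle
      · have := mod_inj h2' (by omega) (by omega)
        omega
      · have := mod_inj h2'.symm (by omega) (by omega)
        omega
    · exfalso
      have e1 : u = (u' + δ') % m := by omega
      have e2 : u' = (u + δ) % m := by omega
      have e3 : (u + δ + δ') % m = u := by
        rw [← Nat.mod_add_mod, ← e2, ← e1]
      have := mod_inj (x := u) (y := u + δ + δ')
        (by rw [e3, Nat.mod_eq_of_lt hu]) (by omega) (by omega)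
      omega


lemma card_Tmatch (hMm : M ≤ m / 2) : (Tmatch (n := n) hn a m M).card = M := by
  rw [Tmatch, card_image_of_injOn, card_range]
  intro j hj j' hj' hpq
  simp only [mem_coe, mem_range] at hj hj'
  have h1 : a + j < n := by omega
  have h2 : a + j + (m - m / 2) < n := by omega
  have h1' : a + j' < n := by omega
  have h2' : a + j' + (m - m / 2) < n := by omega
  rw [pr_eq_iff hn h1 h2 h1' h2'] at hpq
  omega

lemma vertex_ge_of_mem_circ_match {e : Sym2 (Fin n)} (hMm : M ≤ m / 2)
    (he : e ∈ Tcirc hn a m k ∪ Tmatch hn a m M) : ∀ z ∈ e, a ≤ z.val := by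
  intro z hz
  rcases mem_union.mp he with h | h
  · obtain ⟨u, δ, hu, hδ1, hδ2, rfl⟩ := exists_of_mem_Tcirc h
    have hm1 : (u + δ) % m < m := Nat.mod_lt _ (by omega)
    rw [mem_pr_iff hn (by omega) (by omega)] at hz
    omega
  · obtain ⟨j, hj, rfl⟩ := exists_of_mem_Tmatch h
    rw [mem_pr_iff hn (by omega) (by omega)] at hz
    omega

lemma disj_TA (hMm : M ≤ m / 2) :
    Disjoint (TA (n := n) hn a) (Tcirc hn a m k ∪ Tmatch hn a m M) := by
  rw [Finset.disjoint_left]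
  intro e he he'
  obtain ⟨x, y, hxa, hxy, hyn, rfl⟩ := exists_of_mem_TA he
  have hmem : embed hn x ∈ pr hn x y := by
    rw [mem_pr_iff hn (by omega) (by omega)]
    exact Or.inl (embed_val hn (by omega))
  have := vertex_ge_of_mem_circ_match hn hnm hkm hM hMm he' _ hmem
  rw [embed_val hn (by omega)] at this
  omega

lemma disj_circ_match : Disjoint (Tcirc (n := n) hn a m k) (Tmatch hn a m M) := by
  rw [Finset.disjoint_left]
  intro e he he'
  obtain ⟨u, δ, hu, hδ1, hδ2, rfl⟩ := exists_of_mem_Tcirc he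
  obtain ⟨j, hj, hpq⟩ := exists_of_mem_Tmatch he'
  have hM' : M = m / 2 ∧ 2 * k + 4 ≤ m := hM.resolve_left (by omega)
  have hm1 : (u + δ) % m < m := Nat.mod_lt _ (by omega)
  rw [pr_eq_iff hn (by omega) (by omega) (by omega) (by omega)] at hpq
  rcases two_mod (m := m) (x := u + δ) (by omega) with ⟨h1, h2⟩ | ⟨h1, h2⟩ <;> omega


lemma pr_mem_edgeSet {x y : ℕ} (hx : x < n) (hy : y < n) (hxy : x ≠ y) :
    pr hn x y ∈ (⊤ : SimpleGraph (Fin n)).edgeSet := by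
  rw [pr, SimpleGraph.mem_edgeSet, SimpleGraph.top_adj]
  intro hc
  have := congrArg Fin.val hc
  rw [embed_val hn hx, embed_val hn hy] at this
  exact hxy this

lemma Sfin_subset_edgeSet {e : Sym2 (Fin n)}
    (he : e ∈ TA hn a ∪ Tcirc hn a m k ∪ Tmatch hn a m M) :
    e ∈ (⊤ : SimpleGraph (Fin n)).edgeSet := by
  rcases mem_union.mp he with h | h
  · rcases mem_union.mp h with h | h
    · obtain ⟨x, y, hxa, hxy, hyn, rfl⟩ := exists_of_mem_TA h
      exact pr_mem_edgeSet hn hnm hkm hM (by omega) (by omega) (by omega)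
    · obtain ⟨u, δ, hu, hδ1, hδ2, rfl⟩ := exists_of_mem_Tcirc h
      have hm1 : (u + δ) % m < m := Nat.mod_lt _ (by omega)
      refine pr_mem_edgeSet hn hnm hkm hM (by omega) (by omega) ?_
      rcases two_mod (m := m) (x := u + δ) (by omega) with ⟨h1, h2⟩ | ⟨h1, h2⟩ <;> omega
  · obtain ⟨j, hj, rfl⟩ := exists_of_mem_Tmatch h
    have hM' : M = m / 2 ∧ 2 * k + 4 ≤ m := hM.resolve_left (by omega)
    exact pr_mem_edgeSet hn hnm hkm hM (by omega) (by omega) (by omega)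

lemma e0_not_mem : pr hn a (a + (k + 1)) ∉ TA hn a ∪ Tcirc hn a m k ∪ Tmatch hn a m M := by
  intro he
  have hkn : a + (k + 1) < n := by omega
  have han : a < n := by omega
  rcases mem_union.mp he with h | h
  · rcases mem_union.mp h with h | h
    · obtain ⟨x, y, hxa, hxy, hyn, hpq⟩ := exists_of_mem_TA h
      rw [pr_eq_iff hn han hkn (by omega) (by omega)] at hpq
      omega
    · obtain ⟨u, δ, hu, hδ1, hδ2, hpq⟩ := exists_of_mem_Tcirc h
      have hm1 : (u + δ) % m < m := Nat.mod_lt _ (by omega)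
      rw [pr_eq_iff hn han hkn (by omega) (by omega)] at hpq
      rcases two_mod (m := m) (x := u + δ) (by omega) with ⟨h1, h2⟩ | ⟨h1, h2⟩ <;> omega
  · obtain ⟨j, hj, hpq⟩ := exists_of_mem_Tmatch h
    have hM' : M = m / 2 ∧ 2 * k + 4 ≤ m := hM.resolve_left (by omega)
    rw [pr_eq_iff hn han hkn (by omega) (by omega)] at hpq
    omega

end Main

/-- neighborhood control set -/
def Nfin (m k M u : ℕ) : Finset ℕ :=
  ((Icc 1 k).image fun δ => (u + δ) % m) ∪ ((Icc 1 k).image fun δ => (u + (m - δ)) % m) ∪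
    (if u < M then {u + (m - m / 2)}
     else if m - m / 2 ≤ u ∧ u - (m - m / 2) < M then {u - (m - m / 2)} else ∅)

lemma card_Nfin_le (m k M u : ℕ) :
    (Nfin m k M u).card ≤ 2 * k + (if M = 0 then 0 else 1) := by
  refine le_trans (card_union_le _ _) ?_
  have ha : (((Icc 1 k).image fun δ => (u + δ) % m) ∪
      ((Icc 1 k).image fun δ => (u + (m - δ)) % m)).card ≤ k + k := by
    refine le_trans (card_union_le _ _) ?_
    have h1 := card_image_le (s := Icc 1 k) (f := fun δ => (u + δ) % m)
    have h2 := card_image_le (s := Icc 1 k) (f := fun δ => (u + (m - δ)) % m)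
    rw [Nat.card_Icc] at h1 h2
    omega
  have hb : (if u < M then ({u + (m - m / 2)} : Finset ℕ)
      else if m - m / 2 ≤ u ∧ u - (m - m / 2) < M then {u - (m - m / 2)} else ∅).card ≤
      if M = 0 then 0 else 1 := by
    split_ifs with h1 h2 h3 h4 h5 <;> simp_all <;> omega
  omega

section Main2

variable {n a m k M : ℕ} (hn : 0 < n) (hnm : n = a + m) (hkm : 2 * k + 3 ≤ m)
  (hM : M = 0 ∨ (M = m / 2 ∧ 2 * k + 4 ≤ m))

include hnm hkm hM

lemma mem_Nfin_of_adj {v w : Fin n} (hv : a ≤ v.val) (hw : a ≤ w.val)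
    (he : s(v, w) ∈ Tcirc hn a m k ∪ Tmatch hn a m M) :
    w.val - a ∈ Nfin m k M (v.val - a) := by
  have hev : embed hn v.val = v := Fin.ext (embed_val hn v.isLt)
  have hew : embed hn w.val = w := Fin.ext (embed_val hn w.isLt)
  have hsw : s(v, w) = pr hn v.val w.val := by rw [pr, hev, hew]
  rw [hsw] at he
  rcases mem_union.mp he with h | h
  · obtain ⟨u, δ, hu, hδ1, hδ2, hpq⟩ := exists_of_mem_Tcirc h
    have hm1 : (u + δ) % m < m := Nat.mod_lt _ (by omega)
    rw [pr_eq_iff hn v.isLt w.isLt (by omega) (by omega)] at hpq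
    rw [Nfin]
    rcases hpq with ⟨h1, h2⟩ | ⟨h1, h2⟩
    · refine mem_union_left _ (mem_union_left _ ?_)
      rw [mem_image]
      refine ⟨δ, mem_Icc.mpr ⟨hδ1, hδ2⟩, ?_⟩
      have huv : v.val - a = u := by omega
      rw [huv]
      omega
    · refine mem_union_left _ (mem_union_right _ ?_)
      rw [mem_image]
      refine ⟨δ, mem_Icc.mpr ⟨hδ1, hδ2⟩, ?_⟩
      have huv : v.val - a = (u + δ) % m := by omega
      rw [huv, Nat.mod_add_mod]
      have : u + δ + (m - δ) = u + m := by omega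
      rw [this, Nat.add_mod_right, Nat.mod_eq_of_lt hu]
      omega
  · obtain ⟨j, hj, hpq⟩ := exists_of_mem_Tmatch h
    have hM' : M = m / 2 ∧ 2 * k + 4 ≤ m := hM.resolve_left (by omega)
    rw [pr_eq_iff hn v.isLt w.isLt (by omega) (by omega)] at hpq
    rw [Nfin]
    refine mem_union_right _ ?_
    rcases hpq with ⟨h1, h2⟩ | ⟨h1, h2⟩
    · rw [if_pos (by omega), mem_singleton]
      omega
    · rw [if_neg (by omega), if_pos (by omega), mem_singleton]
      omega

end Main2


lemma two_mul_choose_two (i : ℕ) : 2 * Nat.choose i 2 = i * (i - 1) := by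
  rw [Nat.choose_two_right, Nat.mul_div_cancel']
  exact (Nat.even_mul_pred_self i).two_dvd

lemma sum_aux (n a : ℕ) (h : a ≤ n) :
    2 * ∑ x ∈ Finset.range a, ((n : ℤ) - (x + 1)) = a * (2 * n - a - 1) := by
  induction a with
  | zero => simp
  | succ b ih =>
    have ih' := ih (by omega)
    rw [Finset.sum_range_succ]
    push_cast
    linear_combination ih'

end ARSF

open ARSF in
theorem antiRamsey_starForest_lower (t : ℕ) (ht : 1 ≤ t) (p : ℕ → ℕ) (s : ℕ)
    (hp1 : 2 ≤ p 1)
    (hmono : ∀ i j, 1 ≤ i → i ≤ j → j ≤ t → p j ≤ p i)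
    (hplb : ∀ i, 1 ≤ i → i ≤ t → 1 ≤ p i)
    (hs1 : 1 ≤ s) (hst : s ≤ t)
    (hsp : ∀ i, 1 ≤ i → i ≤ s → 2 ≤ p i)
    (hsmax : ∀ i, s < i → i ≤ t → p i = 1)
    (i : ℕ) (hi1 : 1 ≤ i) (his : i ≤ s)
    (n : ℕ) (hn : i - 1 + ∑ j ∈ Finset.Icc 1 t, (p j + 1) ≤ n) :
    ((i : ℤ) - 1) * n - (Nat.choose i 2 : ℤ) + ((p i : ℤ) - 2) * ((n : ℤ) - i + 1) / 2 + 1 ≤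
      (antiRamsey n (starForest t (fun j => p (j.val + 1))) : ℤ) := by
  classical
  have hit : i ≤ t := le_trans his hst
  -- basic numeric setup
  have hsum : p i + 1 ≤ ∑ j ∈ Finset.Icc 1 t, (p j + 1) :=
    Finset.single_le_sum (f := fun j => p j + 1) (fun j _ => Nat.zero_le _)
      (Finset.mem_Icc.mpr ⟨hi1, hit⟩)
  have hpi2 : 2 ≤ p i := hsp i hi1 his
  set a := i - 1 with ha
  set m := n - a with hm
  set d := p i - 2 with hd
  set k := d / 2 with hk
  set M : ℕ := if d % 2 = 1 then m / 2 else 0 with hMdef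
  have hnm : n = a + m := by omega
  have hdm : d + 3 ≤ m := by omega
  have hn0 : 0 < n := by omega
  have hkm : 2 * k + 3 ≤ m := by omega
  have hM : M = 0 ∨ (M = m / 2 ∧ 2 * k + 4 ≤ m) := by
    by_cases hpar : d % 2 = 1
    · right
      rw [hMdef, if_pos hpar]
      exact ⟨rfl, by omega⟩
    · left
      rw [hMdef, if_neg hpar]
  have hMm : M ≤ m / 2 := by rcases hM with h | ⟨h, _⟩ <;> omega
  set G := starForest t (fun j => p (j.val + 1)) with hG
  set Sf : Finset (Sym2 (Fin n)) := TA hn0 a ∪ Tcirc hn0 a m k ∪ Tmatch hn0 a m M with hSf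
  obtain ⟨enc, henc⟩ := Countable.exists_injective_nat (Sym2 (Fin n))
  set c : Sym2 (Fin n) → ℕ := fun e => if e ∈ Sf then enc e + 1 else 0 with hc
  have hcdef : ∀ e, c e = if e ∈ Sf then enc e + 1 else 0 := fun _ => rfl
  -- color count of c
  have himg : c '' (⊤ : SimpleGraph (Fin n)).edgeSet =
      ((fun e => enc e + 1) '' ↑Sf) ∪ {0} := by
    ext x
    simp only [Set.mem_image, Set.mem_union, Set.mem_singleton_iff, Finset.mem_coe]
    constructor
    · rintro ⟨e, he, rfl⟩
      by_cases hs : e ∈ Sf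
      · exact Or.inl ⟨e, hs, by rw [hcdef, if_pos hs]⟩
      · exact Or.inr (by rw [hcdef, if_neg hs])
    · rintro (⟨e, he, rfl⟩ | rfl)
      · exact ⟨e, Sfin_subset_edgeSet hn0 hnm hkm hM he, by rw [hcdef, if_pos he]⟩
      · exact ⟨pr hn0 a (a + (k + 1)),
          pr_mem_edgeSet hn0 hnm hkm hM (by omega) (by omega) (by omega),
          by rw [hcdef, if_neg (e0_not_mem hn0 hnm hkm hM)]⟩
  have hdisj0 : Disjoint ((fun e => enc e + 1) '' ↑Sf) ({0} : Set ℕ) := by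
    rw [Set.disjoint_singleton_right]
    rintro ⟨e, -, h⟩
    exact Nat.succ_ne_zero _ h
  have hcc : colorCount c = Sf.card + 1 := by
    rw [colorCount, himg, Set.ncard_union_eq hdisj0 ((Sf.finite_toSet).image _)
      (Set.finite_singleton 0),
      Set.ncard_image_of_injective _ (fun x y hxy => henc (by omega)),
      Set.ncard_coe_finset, Set.ncard_singleton]
  -- no rainbow copy
  have hnorb : ¬ HasRainbowCopy c G := by
    rintro ⟨f, hfinj, hfrb⟩
    have key : ∃ j : Fin t, j.val + 1 ≤ i ∧
        ∀ l : Fin (p (j.val + 1) + 1), a ≤ (f ⟨j, l⟩).val := by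
      by_contra hcon
      push_neg at hcon
      have hineq : (Finset.range i).card ≤ (Finset.range a).card := by
        apply Finset.card_le_card_of_injOn (fun j => if hj : j < t then
          (if hj2 : j + 1 ≤ i then (f ⟨⟨j, hj⟩, (hcon ⟨j, hj⟩ hj2).choose⟩).val else 0) else 0)
        · intro j hj
          rw [Finset.mem_coe, Finset.mem_range] at hj ⊢
          have hjt : j < t := by omega
          have hji' : j + 1 ≤ i := by omega
          dsimp only
          rw [dif_pos hjt, dif_pos hji']
          exact (hcon ⟨j, hjt⟩ hji').choose_spec
        · intro j hj j' hj' heq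
          simp only [Finset.coe_range, Set.mem_Iio] at hj hj'
          have hjt : j < t := by omega
          have hjt' : j' < t := by omega
          have hji1 : j + 1 ≤ i := by omega
          have hji2 : j' + 1 ≤ i := by omega
          dsimp only at heq
          rw [dif_pos hjt, dif_pos hji1, dif_pos hjt', dif_pos hji2] at heq
          have h2 := hfinj (Fin.val_injective heq)
          exact congrArg (fun z => z.1.val) h2
      rw [Finset.card_range, Finset.card_range] at hineq
      omega
    obtain ⟨j, hji, hjB⟩ := key
    set P := p (j.val + 1) with hP
    have hPd : d + 2 ≤ P := by
      have := hmono (j.val + 1) i (by omega) hji hit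
      omega
    set v := f ⟨j, (0 : Fin (P + 1))⟩ with hv
    set L : Finset (Fin (P + 1)) := ({0} : Finset (Fin (P + 1)))ᶜ with hL
    set L0 := L.filter (fun l => c (s(v, f ⟨j, l⟩)) = 0) with hL0
    have hedge : ∀ l : Fin (P + 1), l ≠ 0 →
        s((⟨j, (0 : Fin (P + 1))⟩ : Σ i : Fin t, Fin (p (i.val + 1) + 1)), ⟨j, l⟩) ∈
          G.edgeSet := by
      intro l hl
      rw [SimpleGraph.mem_edgeSet]
      refine ⟨rfl, Or.inl ⟨by simp, ?_⟩⟩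
      simpa using fun h => hl (Fin.ext h)
    have hL0card : L0.card ≤ 1 := by
      rw [Finset.card_le_one]
      intro l hl l' hl'
      by_contra hne
      rw [hL0, Finset.mem_filter] at hl hl'
      have hll : l ≠ 0 := by simpa [hL] using hl.1
      have hll' : l' ≠ 0 := by simpa [hL] using hl'.1
      have hedne : s((⟨j, (0 : Fin (P + 1))⟩ : Σ i : Fin t, Fin (p (i.val + 1) + 1)), ⟨j, l⟩) ≠
          s((⟨j, (0 : Fin (P + 1))⟩ : Σ i : Fin t, Fin (p (i.val + 1) + 1)), ⟨j, l'⟩) := by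
        intro hceq
        rw [Sym2.congr_right] at hceq
        apply hne
        injection hceq
      have hcol := hfrb _ (hedge l hll) _ (hedge l' hll') hedne
      rw [Sym2.map_pair_eq, Sym2.map_pair_eq] at hcol
      rw [← hv] at hcol
      rw [hl.2, hl'.2] at hcol
      exact hcol rfl
    have hmap : ∀ l ∈ L \ L0, ((f ⟨j, l⟩).val - a) ∈ Nfin m k M (v.val - a) := by
      intro l hl
      rw [Finset.mem_sdiff] at hl
      have hl2 : c (s(v, f ⟨j, l⟩)) ≠ 0 := fun h0 =>
        hl.2 (Finset.mem_filter.mpr ⟨hl.1, h0⟩)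
      have hmemS : s(v, f ⟨j, l⟩) ∈ Sf := by
        by_contra hnotin
        exact hl2 (by rw [hcdef, if_neg hnotin])
      have hva : a ≤ v.val := hjB 0
      have hwa : a ≤ (f ⟨j, l⟩).val := hjB l
      rcases Finset.mem_union.mp hmemS with h1 | h1
      · rcases Finset.mem_union.mp h1 with h2 | h2
        · exfalso
          obtain ⟨x, y, hxa, hxy, hyn, hpq⟩ := exists_of_mem_TA h2
          have hx' : embed hn0 x ∈ pr hn0 x y := by
            rw [mem_pr_iff hn0 (by omega) (by omega)]
            exact Or.inl (embed_val hn0 (by omega))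
          rw [← hpq] at hx'
          rcases Sym2.mem_iff.mp hx' with hB | hB <;>
            · have := congrArg Fin.val hB
              rw [embed_val hn0 (by omega)] at this
              omega
        · exact mem_Nfin_of_adj hn0 hnm hkm hM hva hwa (Finset.mem_union_left _ h2)
      · exact mem_Nfin_of_adj hn0 hnm hkm hM hva hwa (Finset.mem_union_right _ h1)
    have hcard1 : (L \ L0).card ≤ (Nfin m k M (v.val - a)).card := by
      apply Finset.card_le_card_of_injOn _ hmap
      intro l hl l' hl' heq
      dsimp only at heq
      have hval : (f ⟨j, l⟩).val = (f ⟨j, l'⟩).val := by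
        have h1 := hjB l
        have h2 := hjB l'
        omega
      have h3 := hfinj (Fin.val_injective hval)
      injection h3
    have hLcard : L.card = P := by
      rw [hL, Finset.card_compl, Finset.card_singleton, Fintype.card_fin]
      omega
    have hsd : (L \ L0).card = L.card - L0.card := Finset.card_sdiff_of_subset (Finset.filter_subset _ _)
    have hNle := card_Nfin_le m k M (v.val - a)
    have hite : (if M = 0 then 0 else 1) + 2 * k ≤ d := by
      by_cases hpar : d % 2 = 1
      · have hM2 : M = m / 2 := by rw [hMdef, if_pos hpar]
        have : M ≠ 0 := by omega
        rw [if_neg this]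
        omega
      · have hM2 : M = 0 := by rw [hMdef, if_neg hpar]
        rw [if_pos hM2]
        omega
    omega
  -- antiRamsey lower bound via this coloring
  have hbdd : BddAbove {m' | ∃ c' : Sym2 (Fin n) → ℕ, ¬ HasRainbowCopy c' G ∧ colorCount c' = m'} := by
    refine ⟨Fintype.card (Sym2 (Fin n)), ?_⟩
    rintro x ⟨c', -, rfl⟩
    calc colorCount c' ≤ (⊤ : SimpleGraph (Fin n)).edgeSet.ncard :=
          Set.ncard_image_le (Set.toFinite _)
      _ ≤ (Set.univ : Set (Sym2 (Fin n))).ncard :=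
          Set.ncard_le_ncard (Set.subset_univ _) (Set.toFinite _)
      _ = Fintype.card (Sym2 (Fin n)) := by rw [Set.ncard_univ, Nat.card_eq_fintype_card]
  have hle : colorCount c ≤ antiRamsey n G := le_csSup hbdd ⟨c, hnorb, rfl⟩
  -- cardinality of Sf
  have hdTA := disj_TA hn0 hnm hkm hM hMm
  have hdTAc : Disjoint (TA (n := n) hn0 a) (Tcirc hn0 a m k) :=
    (Finset.disjoint_union_right.mp hdTA).1
  have hdTAm : Disjoint (TA (n := n) hn0 a) (Tmatch hn0 a m M) :=
    (Finset.disjoint_union_right.mp hdTA).2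
  have hSfcard : Sf.card = (∑ x ∈ Finset.range a, (n - (x + 1))) + m * k + M := by
    rw [hSf, Finset.card_union_of_disjoint
        (Finset.disjoint_union_left.mpr ⟨hdTAm, disj_circ_match hn0 hnm hkm hM⟩),
      Finset.card_union_of_disjoint hdTAc,
      card_TA hn0 hnm hkm hM, card_Tcirc hn0 hnm hkm hM, card_Tmatch hn0 hnm hkm hM hMm]
  -- arithmetic conclusion
  have hcastsum : ((∑ x ∈ Finset.range a, (n - (x + 1)) : ℕ) : ℤ) =
      ∑ x ∈ Finset.range a, ((n : ℤ) - (x + 1)) := by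
    rw [Nat.cast_sum]
    refine Finset.sum_congr rfl fun x hx => ?_
    rw [Finset.mem_range] at hx
    rw [Nat.cast_sub (by omega)]
    push_cast
    ring
  have E1 : 2 * ((∑ x ∈ Finset.range a, (n - (x + 1)) : ℕ) : ℤ) =
      (a : ℤ) * (2 * n - a - 1) := by
    rw [hcastsum]
    exact sum_aux n a (by omega)
  have E2 : 2 * (Nat.choose i 2 : ℤ) = (i : ℤ) * ((i : ℤ) - 1) := by
    have h := two_mul_choose_two i
    have : ((2 * Nat.choose i 2 : ℕ) : ℤ) = ((i * (i - 1) : ℕ) : ℤ) := by rw [h]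
    push_cast [Nat.cast_sub hi1] at this
    linarith
  have hia : (a : ℤ) = (i : ℤ) - 1 := by omega
  have hNmk : d * m / 2 = m * k + M := by
    by_cases hpar : d % 2 = 1
    · have hM2 : M = m / 2 := by rw [hMdef, if_pos hpar]
      have hd2 : d = 2 * k + 1 := by omega
      have : d * m = 2 * (m * k) + m := by rw [hd2]; ring
      rw [this, Nat.mul_add_div (by norm_num)]
      omega
    · have hM2 : M = 0 := by rw [hMdef, if_neg hpar]
      have hd2 : d = 2 * k := by omega
      have : d * m = 2 * (m * k) := by rw [hd2]; ring
      rw [this, Nat.mul_div_cancel_left _ (by norm_num)]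
      omega
  have E3 : ((p i : ℤ) - 2) * ((n : ℤ) - i + 1) / 2 = ((m * k + M : ℕ) : ℤ) := by
    have hA : (p i : ℤ) - 2 = ((d : ℕ) : ℤ) := by omega
    have hB : (n : ℤ) - i + 1 = ((m : ℕ) : ℤ) := by omega
    rw [hA, hB, ← Nat.cast_mul, ← hNmk]
    rfl
  have hgoal : ((i : ℤ) - 1) * n - (Nat.choose i 2 : ℤ) =
      ((∑ x ∈ Finset.range a, (n - (x + 1)) : ℕ) : ℤ) := by
    rw [hia] at E1
    linarith [E1, E2, sq_nonneg ((i : ℤ))]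
  rw [E3, hgoal]
  have hfin : (Sf.card + 1 : ℤ) ≤ (antiRamsey n G : ℤ) := by
    have := hcc ▸ hle
    exact_mod_cast this
  rw [hSfcard] at hfin
  push_cast at hfin ⊢
  linarith
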